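/- Let J(X) = f(X) + g(X) be the objective of a Generalised Min-Cut instance, with f superadditive (hence increasing) and g the posimodular cut function of a weighted graph on V. Let X be an optimal solution to J (a nonempty proper subset of V minimizing J, with J(X) < ∞), and let Y be a minimal optimal solution to the Min-Cut problem for g. Then X ⊆ Y, or X ⊆ V\Y, or X is itself an optimal solution to the Min-Cut problem for g. -/

import Mathlib

variable {V : Type*} [Fintype V] [DecidableEq V]

/-- The cut function of an undirected graph with symmetric edge weights `w`. -/
def cutFun (w : V → V → NNRat) (X : Finset V) : NNRat :=
  ∑ u ∈ X, ∑ v ∈ Xᶜ, w u v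

/-- A solution: a nonempty proper subset of the vertex set. -/
def IsCutSolution (X : Finset V) : Prop := X ≠ ∅ ∧ X ≠ Finset.univ

/-- An optimal solution to the Min-Cut problem. -/
def IsOptCut (w : V → V → NNRat) (X : Finset V) : Prop :=
  IsCutSolution X ∧ ∀ Y : Finset V, IsCutSolution Y → cutFun w X ≤ cutFun w Y

/-- A minimal optimal solution to the Min-Cut problem. -/
def IsMinOptCut (w : V → V → NNRat) (X : Finset V) : Prop :=
  IsOptCut w X ∧ ∀ Y : Finset V, Y ⊂ X → ¬ IsOptCut w Y


lemma cut_eq (w : V → V → NNRat) (X : Finset V) :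
    cutFun w X = ∑ u : V, ∑ v : V, (if u ∈ X ∧ v ∉ X then w u v else 0) := by
  unfold cutFun
  rw [← Finset.sum_subset (Finset.subset_univ X)]
  · apply Finset.sum_congr rfl
    intro u hu
    rw [← Finset.sum_subset (Finset.subset_univ Xᶜ)]
    · apply Finset.sum_congr rfl
      intro v hv
      simp [Finset.mem_compl.mp hv, hu]
    · intro v _ hv
      simp [Finset.mem_compl.not.mp hv]
  · intro u _ hu
    simp [hu]

lemma key2 (w : V → V → NNRat) (hw : ∀ u v, w u v = w v u) (S : Finset V) :
    cutFun w S + cutFun w S =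
      ∑ u : V, ∑ v : V,
        ((if u ∈ S ∧ v ∉ S then w u v else 0) + (if v ∈ S ∧ u ∉ S then w u v else 0)) := by
  have h2 : cutFun w S = ∑ u : V, ∑ v : V, (if v ∈ S ∧ u ∉ S then w u v else 0) := by
    rw [cut_eq, Finset.sum_comm]
    apply Finset.sum_congr rfl; intro u _
    apply Finset.sum_congr rfl; intro v _
    rw [hw]
  nth_rewrite 2 [h2]
  rw [cut_eq w S]
  rw [← Finset.sum_add_distrib]
  apply Finset.sum_congr rfl; intro u _
  rw [← Finset.sum_add_distrib]

lemma posi (w : V → V → NNRat) (hw : ∀ u v, w u v = w v u) (A B : Finset V) :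
    cutFun w (A \ B) + cutFun w (B \ A) ≤ cutFun w A + cutFun w B := by
  have hsum : (cutFun w (A\B) + cutFun w (A\B)) + (cutFun w (B\A) + cutFun w (B\A)) ≤
      (cutFun w A + cutFun w A) + (cutFun w B + cutFun w B) := by
    rw [key2 w hw, key2 w hw, key2 w hw, key2 w hw,
      ← Finset.sum_add_distrib, ← Finset.sum_add_distrib]
    apply Finset.sum_le_sum; intro u _
    rw [← Finset.sum_add_distrib, ← Finset.sum_add_distrib]
    apply Finset.sum_le_sum; intro v _
    simp only [Finset.mem_sdiff]
    by_cases h1 : u ∈ A <;> by_cases h2 : u ∈ B <;> by_cases h3 : v ∈ A <;>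
      by_cases h4 : v ∈ B <;>
      simp [h1, h2, h3, h4, add_comm, zero_le]
  rw [← two_mul, ← two_mul, ← two_mul, ← two_mul, ← mul_add, ← mul_add] at hsum
  exact le_of_mul_le_mul_left hsum (by norm_num)

/-- If `X` is an optimal solution (of finite value) to the Generalised Min-Cut objective
`J = f + g` with `f` superadditive and `g` the cut function, and `Y` is a minimal optimal
solution to the underlying Min-Cut problem, then `X ⊆ Y`, or `X ⊆ V \ Y`, or `X` is itself
an optimal solution to the underlying Min-Cut problem. -/
theorem stmt8 (w : V → V → NNRat) (hw : ∀ u v, w u v = w v u)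
    (f : Finset V → WithTop NNRat) (hf0 : f ∅ = 0)
    (hfsup : ∀ A B : Finset V, Disjoint A B → f A + f B ≤ f (A ∪ B))
    (X Y : Finset V)
    (hXsol : IsCutSolution X)
    (hXfin : f X + (cutFun w X : WithTop NNRat) < ⊤)
    (hXopt : ∀ Z : Finset V, IsCutSolution Z →
      f X + (cutFun w X : WithTop NNRat) ≤ f Z + (cutFun w Z : WithTop NNRat))
    (hY : IsMinOptCut w Y) :
    X ⊆ Y ∨ X ⊆ Yᶜ ∨ IsOptCut w X := by
  -- f is monotone
  have fmono : ∀ A C : Finset V, A ⊆ C → f A ≤ f C := by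
    intro A C h
    calc f A ≤ f A + f (C \ A) := le_self_add
      _ ≤ f (A ∪ C \ A) := hfsup A (C \ A) Finset.disjoint_sdiff
      _ = f C := by rw [Finset.union_sdiff_of_subset h]
  have hfXne : f X ≠ ⊤ := by
    intro h
    rw [h] at hXfin
    simp at hXfin
  by_cases hXY : X ⊆ Y
  · exact Or.inl hXY
  by_cases hXYc : X ⊆ Yᶜ
  · exact Or.inr (Or.inl hXYc)
  -- X ∩ Y ≠ ∅ and X \ Y ≠ ∅
  obtain ⟨a, haX, haY⟩ : ∃ a ∈ X, a ∈ Y := by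
    by_contra h
    push_neg at h
    exact hXYc (fun x hx => Finset.mem_compl.mpr (h x hx))
  obtain ⟨b, hbX, hbY⟩ : ∃ b ∈ X, b ∉ Y := by
    by_contra h
    push_neg at h
    exact hXY h
  have hXdYsol : IsCutSolution (X \ Y) := by
    constructor
    · intro h
      exact absurd h (Finset.nonempty_iff_ne_empty.mp ⟨b, Finset.mem_sdiff.mpr ⟨hbX, hbY⟩⟩)
    · intro h
      exact hXsol.2 (Finset.univ_subset_iff.mp (h ▸ Finset.sdiff_subset))
  by_cases hYX : Y ⊆ X
  · -- Y ⊆ X : X is an optimal cut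
    right; right
    have hfYX : f Y ≤ f X := fmono Y X hYX
    have hYsol : IsCutSolution Y := hY.1.1
    have h1 : f X + (cutFun w X : WithTop NNRat) ≤ f X + (cutFun w Y : WithTop NNRat) :=
      le_trans (hXopt Y hYsol) (add_le_add_left hfYX _)
    have hXle : cutFun w X ≤ cutFun w Y := by
      have := (WithTop.add_le_add_iff_left hfXne).mp h1
      exact_mod_cast this
    exact ⟨hXsol, fun Z hZ => le_trans hXle (hY.1.2 Z hZ)⟩
  · -- Y \ X ≠ ∅ : contradiction
    exfalso
    obtain ⟨c, hcY, hcX⟩ : ∃ c ∈ Y, c ∉ X := by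
      by_contra h
      push_neg at h
      exact hYX h
    have hYdXsub : Y \ X ⊂ Y := by
      refine Finset.ssubset_iff_of_subset Finset.sdiff_subset |>.mpr ⟨a, haY, ?_⟩
      simp [haX]
    have hYdXsol : IsCutSolution (Y \ X) := by
      constructor
      · intro h
        exact absurd h (Finset.nonempty_iff_ne_empty.mp ⟨c, Finset.mem_sdiff.mpr ⟨hcY, hcX⟩⟩)
      · intro h
        exact hY.1.1.2 (Finset.univ_subset_iff.mp (h ▸ Finset.sdiff_subset))
    have hnotopt : ¬ IsOptCut w (Y \ X) := hY.2 (Y \ X) hYdXsub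
    have hlt : cutFun w Y < cutFun w (Y \ X) := by
      by_contra h
      push_neg at h
      exact hnotopt ⟨hYdXsol, fun Z hZ => le_trans h (hY.1.2 Z hZ)⟩
    have hposi := posi w hw X Y
    have hXd : cutFun w (X \ Y) < cutFun w X := by
      by_contra h
      push_neg at h
      have : cutFun w X + cutFun w Y < cutFun w (X \ Y) + cutFun w (Y \ X) :=
        add_lt_add_of_le_of_lt h hlt
      exact absurd hposi (not_le.mpr this)
    have hJlt : f (X \ Y) + (cutFun w (X \ Y) : WithTop NNRat) <
        f X + (cutFun w X : WithTop NNRat) := by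
      calc f (X \ Y) + (cutFun w (X \ Y) : WithTop NNRat)
          ≤ f X + (cutFun w (X \ Y) : WithTop NNRat) :=
            add_le_add_left (fmono _ _ Finset.sdiff_subset) _
        _ < f X + (cutFun w X : WithTop NNRat) := by
            apply WithTop.add_lt_add_left hfXne
            exact_mod_cast hXd
    exact absurd (hXopt (X \ Y) hXdYsol) (not_le.mpr hJlt)
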